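/- Let k be a field of characteristic 0, f ∈ k[x_1,...,x_n] nonzero, and suppose a ∈ ℤ is such that b_f(a - j) ≠ 0 for all integers j ≥ 1 (e.g., a is the minimal integer root of b_f(s), or smaller). Then 1/f^{-a} generates the localization k[x_1,...,x_n]_f as a module over the Weyl algebra A_n(k). -/

import Mathlib

open MvPolynomial

noncomputable section BernsteinSato

namespace BS

variable (k : Type*) [Field k] [CharZero k] (n : ℕ)

/-- The fraction field of the polynomial ring `k[x_1, ..., x_n]`. -/
abbrev K := FractionRing (MvPolynomial (Fin n) k)

/-- The canonical map `k[x_1,...,x_n] → K`. -/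
abbrev ι : MvPolynomial (Fin n) k →+* K k n :=
  algebraMap (MvPolynomial (Fin n) k) (K k n)

/-- The partial derivative `∂/∂x_i` extended to the fraction field `K` by the
quotient rule `d(a/b) = (b·da - a·db)/b²`. -/
def pd (i : Fin n) (x : K k n) : K k n :=
  let s := IsLocalization.sec (nonZeroDivisors (MvPolynomial (Fin n) k)) x
  (ι k n (pderiv i s.1) * ι k n (s.2 : MvPolynomial (Fin n) k)
      - ι k n s.1 * ι k n (pderiv i (s.2 : MvPolynomial (Fin n) k)))
    / (ι k n (s.2 : MvPolynomial (Fin n) k)) ^ 2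

/-- The coefficientwise extension of `pd i` to `K[s]`. -/
def pdS (i : Fin n) (p : Polynomial (K k n)) : Polynomial (K k n) :=
  p.sum fun j c => Polynomial.C (pd k n i c) * Polynomial.X ^ j

/-- The action of `∂_i` on the module `k[x, 1/f, s]·f^s`, where an element
`p ∈ K[s]` represents `p·f^s` :
`∂_i (p f^s) = ((∂p/∂x_i) + s p (∂f/∂x_i)/f) f^s`. -/
def Dop (f : MvPolynomial (Fin n) k) (i : Fin n) (p : Polynomial (K k n)) :
    Polynomial (K k n) :=
  pdS k n i p + Polynomial.X * Polynomial.C (ι k n (pderiv i f) / ι k n f) * p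

/-- The predicate `InSub f p` says that `p·f^s` belongs to the `A_n(k)[s]`-submodule
of `k[x, 1/f, s]·f^s` generated by `f^{s+1} = f·f^s`; that is, `p·f^s = Q·f^{s+1}`
for some operator `Q ∈ A_n(k)[s]`. The submodule is the closure of `{f·f^s}` under
addition, scalar multiplication by `k`, multiplication by the `x_i`, multiplication
by `s`, and the action of the `∂_i`. -/
inductive InSub (f : MvPolynomial (Fin n) k) : Polynomial (K k n) → Prop
  | base : InSub f (Polynomial.C (ι k n f))
  | add {p q} : InSub f p → InSub f q → InSub f (p + q)
  | smul (c : k) {p} : InSub f p →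
      InSub f (Polynomial.C (ι k n (MvPolynomial.C c)) * p)
  | mulX (i : Fin n) {p} : InSub f p →
      InSub f (Polynomial.C (ι k n (MvPolynomial.X i)) * p)
  | mulS {p} : InSub f p → InSub f (Polynomial.X * p)
  | diff (i : Fin n) {p} : InSub f p → InSub f (Dop k n f i p)

/-- `J(f)`: the set of polynomials `b(s) ∈ k[s]` for which there exists
`Q ∈ A_n(k)[s]` with `b(s)·f^s = Q·f^{s+1}`. -/
def bsSet (f : MvPolynomial (Fin n) k) : Set (Polynomial k) :=
  {b | InSub k n f (b.map ((ι k n).comp (MvPolynomial.C)))}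

/-- `b` is the Bernstein–Sato polynomial of `f`: the monic generator of the
ideal `J(f)` of polynomials satisfying the functional equation. -/
def IsBernsteinSato (f : MvPolynomial (Fin n) k) (b : Polynomial k) : Prop :=
  b.Monic ∧ b ∈ bsSet k n f ∧ ∀ c ∈ bsSet k n f, b ∣ c

end BS

end BernsteinSato

noncomputable section Loc

namespace BS

variable (k : Type*) [Field k] [CharZero k] (n : ℕ)

/-- The partial derivative `∂/∂x_i` extended to the localization
`R_f = k[x][1/f]` by the quotient rule. -/
def pdAway (f : MvPolynomial (Fin n) k) (i : Fin n)
    (x : Localization.Away f) : Localization.Away f :=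
  let s := IsLocalization.sec (Submonoid.powers f) x
  Localization.mk
    (pderiv i s.1 * (s.2 : MvPolynomial (Fin n) k)
      - s.1 * pderiv i (s.2 : MvPolynomial (Fin n) k))
    (s.2 * s.2)

/-- `GenAway f v y` : `y` belongs to the `A_n(k)`-submodule of `R_f` generated
by `v`, i.e. the closure of `{v}` under addition, `k`-scalar multiplication,
multiplication by the variables `x_i` and the action of the `∂_i`. -/
inductive GenAway (f : MvPolynomial (Fin n) k) (v : Localization.Away f) :
    Localization.Away f → Prop
  | base : GenAway f v v
  | add {p q} : GenAway f v p → GenAway f v q → GenAway f v (p + q)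
  | smul (c : k) {p} : GenAway f v p →
      GenAway f v
        (algebraMap (MvPolynomial (Fin n) k) (Localization.Away f)
          (MvPolynomial.C c) * p)
  | mulX (i : Fin n) {p} : GenAway f v p →
      GenAway f v
        (algebraMap (MvPolynomial (Fin n) k) (Localization.Away f)
          (MvPolynomial.X i) * p)
  | diff (i : Fin n) {p} : GenAway f v p → GenAway f v (pdAway k n f i p)

end BS

end Loc

noncomputable section Proof
set_option maxHeartbeats 1000000
set_option synthInstance.maxHeartbeats 400000
set_option linter.unusedSectionVars false
namespace BSP
open BS Polynomial
variable {k : Type*} [Field k] [CharZero k] {n : ℕ}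

lemma iota_inj : Function.Injective (ι k n) :=
  IsFractionRing.injective _ _

lemma iota_ne_zero {g : MvPolynomial (Fin n) k} (hg : g ≠ 0) : ι k n g ≠ 0 := by
  intro h; exact hg (iota_inj (by simpa using h))

/-- The quotient rule is independent of the representation. -/
lemma pd_spec (i : Fin n) (p q : MvPolynomial (Fin n) k) (hq : q ≠ 0) :
    pd k n i (ι k n p / ι k n q)
      = (ι k n (pderiv i p) * ι k n q - ι k n p * ι k n (pderiv i q))
          / (ι k n q) ^ 2 := by
  set x := ι k n p / ι k n q with hx
  unfold pd
  set s := IsLocalization.sec (nonZeroDivisors (MvPolynomial (Fin n) k)) x with hs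
  have hs2 : (s.2 : MvPolynomial (Fin n) k) ≠ 0 :=
    nonZeroDivisors.ne_zero s.2.property
  have hsec := IsLocalization.sec_spec (nonZeroDivisors (MvPolynomial (Fin n) k)) x
  rw [← hs] at hsec
  have hqK : ι k n q ≠ 0 := iota_ne_zero hq
  have hs2K : ι k n (s.2 : MvPolynomial (Fin n) k) ≠ 0 := iota_ne_zero hs2
  have hpoly : p * (s.2 : MvPolynomial (Fin n) k) = s.1 * q := by
    apply iota_inj
    rw [map_mul, map_mul]
    field_simp [hx] at hsec
    have h' : ι k n p * ι k n (s.2 : MvPolynomial (Fin n) k) / ι k n q = ι k n s.1 := by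
      linear_combination hsec
    rw [div_eq_iff hqK] at h'
    linear_combination h'
  have hder := congrArg (pderiv i) hpoly
  rw [pderiv_mul, pderiv_mul] at hder
  have hderK := congrArg (ι k n) hder
  have hpolyK := congrArg (ι k n) hpoly
  simp only [map_add, map_mul] at hderK hpolyK
  rw [div_eq_div_iff (pow_ne_zero 2 hs2K) (pow_ne_zero 2 hqK)]
  linear_combination (-(ι k n q * ι k n (s.2 : MvPolynomial (Fin n) k))) * hderK
    + (ι k n (pderiv i (s.2 : MvPolynomial (Fin n) k)) * ι k n q
        + ι k n (pderiv i q) * ι k n (s.2 : MvPolynomial (Fin n) k)) * hpolyK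

lemma exists_rep (x : K k n) :
    ∃ p q : MvPolynomial (Fin n) k, q ≠ 0 ∧ x = ι k n p / ι k n q := by
  set s := IsLocalization.sec (nonZeroDivisors (MvPolynomial (Fin n) k)) x with hs
  have hs2 : (s.2 : MvPolynomial (Fin n) k) ≠ 0 := nonZeroDivisors.ne_zero s.2.property
  have hsec := IsLocalization.sec_spec (nonZeroDivisors (MvPolynomial (Fin n) k)) x
  refine ⟨s.1, s.2, hs2, ?_⟩
  rw [← hs] at hsec
  field_simp [iota_ne_zero hs2]
  exact hsec

lemma pd_iota (i : Fin n) (g : MvPolynomial (Fin n) k) :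
    pd k n i (ι k n g) = ι k n (pderiv i g) := by
  have := pd_spec (k := k) (n := n) i g 1 one_ne_zero
  simpa using this

lemma pd_add (i : Fin n) (x y : K k n) : pd k n i (x + y) = pd k n i x + pd k n i y := by
  obtain ⟨p, q, hq, rfl⟩ := exists_rep x
  obtain ⟨r, u, hu, rfl⟩ := exists_rep y
  have hqu : q * u ≠ 0 := mul_ne_zero hq hu
  have h1 : ι k n p / ι k n q + ι k n r / ι k n u
      = ι k n (p * u + r * q) / ι k n (q * u) := by
    field_simp [iota_ne_zero hq, iota_ne_zero hu]
    simp only [map_add, map_mul]; ring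
  rw [h1, pd_spec _ _ _ hqu, pd_spec _ _ _ hq, pd_spec _ _ _ hu]
  simp only [map_add, pderiv_mul, map_mul]
  field_simp [iota_ne_zero hq, iota_ne_zero hu]
  ring

lemma pd_mul (i : Fin n) (x y : K k n) :
    pd k n i (x * y) = pd k n i x * y + x * pd k n i y := by
  obtain ⟨p, q, hq, rfl⟩ := exists_rep x
  obtain ⟨r, u, hu, rfl⟩ := exists_rep y
  have hqu : q * u ≠ 0 := mul_ne_zero hq hu
  have h1 : ι k n p / ι k n q * (ι k n r / ι k n u)
      = ι k n (p * r) / ι k n (q * u) := by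
    field_simp [iota_ne_zero hq, iota_ne_zero hu]
    simp only [map_add, map_mul]; ring
  rw [h1, pd_spec _ _ _ hqu, pd_spec _ _ _ hq, pd_spec _ _ _ hu]
  simp only [pderiv_mul, map_add, map_mul]
  field_simp [iota_ne_zero hq, iota_ne_zero hu]
  ring

lemma pd_intCast (i : Fin n) (t : ℤ) : pd k n i (t : K k n) = 0 := by
  rw [← map_intCast (ι k n) t, pd_iota,
    ← map_intCast (MvPolynomial.C : k →+* MvPolynomial (Fin n) k) t, pderiv_C, map_zero]

lemma pd_one (i : Fin n) : pd k n i (1 : K k n) = 0 := by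
  have := pd_iota (k := k) (n := n) i 1
  simpa using this

lemma pd_pow (i : Fin n) (x : K k n) (m : ℕ) :
    pd k n i (x ^ (m + 1)) = (m + 1 : K k n) * x ^ m * pd k n i x := by
  induction m with
  | zero => simp
  | succ m ih =>
    have : x ^ (m + 2) = x * x ^ (m + 1) := by ring
    rw [this, pd_mul, ih]
    push_cast
    ring

lemma pd_zpow (i : Fin n) (g : MvPolynomial (Fin n) k) (hg : g ≠ 0) (t : ℤ) :
    pd k n i ((ι k n g) ^ t) = t * (ι k n g) ^ (t - 1) * ι k n (pderiv i g) := by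
  have hG : ι k n g ≠ 0 := iota_ne_zero hg
  have hpdG : pd k n i (ι k n g) = ι k n (pderiv i g) := pd_iota i g
  cases t with
  | ofNat m =>
    cases m with
    | zero => simp [pd_one]
    | succ m =>
      rw [show (Int.ofNat (m + 1)) = ((m + 1 : ℕ) : ℤ) from rfl, zpow_natCast,
        pd_pow, show (((m + 1 : ℕ) : ℤ) - 1) = (m : ℤ) by omega,
        zpow_natCast]
      push_cast
      rw [hpdG]
  | negSucc m =>
    set G := ι k n g
    set DG := ι k n (pderiv i g)
    set t := Int.negSucc m with ht
    have h1 : G ^ t * G ^ (m + 1) = 1 := by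
      rw [← zpow_natCast G (m + 1), ← zpow_add₀ hG,
        show t + ((m + 1 : ℕ) : ℤ) = 0 by rw [ht, Int.negSucc_eq]; push_cast; ring, zpow_zero]
    have h2 := congrArg (pd k n i) h1
    rw [pd_mul, pd_pow, pd_one, hpdG] at h2
    have e2 : G ^ (t - 1) * G ^ (m + 1) = G ^ t * G ^ m := by
      rw [← zpow_natCast G (m + 1), ← zpow_natCast G m, ← zpow_add₀ hG, ← zpow_add₀ hG]
      congr 1
      omega
    have hGm : G ^ (m + 1) ≠ 0 := pow_ne_zero _ hG
    apply mul_right_cancel₀ hGm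
    rw [show ((t : K k n)) = -((m : K k n) + 1) by rw [ht]; push_cast [Int.negSucc_eq]; ring]
    linear_combination h2 + ((m : K k n) + 1) * DG * e2

variable (f : MvPolynomial (Fin n) k)

lemma mem_powers_ne_zero (hf : f ≠ 0) {q : MvPolynomial (Fin n) k}
    (hq : q ∈ Submonoid.powers f) : q ≠ 0 := by
  obtain ⟨e, rfl⟩ := hq
  exact pow_ne_zero e hf

lemma phiAux (hf : f ≠ 0) :
    ∀ y : Submonoid.powers f, IsUnit (ι k n (y : MvPolynomial (Fin n) k)) :=
  fun y => isUnit_iff_ne_zero.mpr (iota_ne_zero (mem_powers_ne_zero f hf y.property))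

/-- The canonical embedding `R_f → K`. -/
def phi (hf : f ≠ 0) : Localization.Away f →+* K k n :=
  IsLocalization.lift (phiAux f hf)

lemma phi_alg (hf : f ≠ 0) (g : MvPolynomial (Fin n) k) :
    phi f hf (algebraMap (MvPolynomial (Fin n) k) (Localization.Away f) g) = ι k n g :=
  IsLocalization.lift_eq _ _

lemma phi_inj (hf : f ≠ 0) : Function.Injective (phi f hf) := by
  rw [phi, IsLocalization.lift_injective_iff]
  intro x y
  constructor
  · intro h
    have := IsLocalization.injective (Localization.Away f)
      (powers_le_nonZeroDivisors_of_noZeroDivisors hf) h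
    rw [this]
  · intro h
    rw [iota_inj h]

lemma phi_mk (hf : f ≠ 0) (p : MvPolynomial (Fin n) k) (q : Submonoid.powers f) :
    phi f hf (Localization.mk p q) = ι k n p / ι k n (q : MvPolynomial (Fin n) k) := by
  have hq : ι k n (q : MvPolynomial (Fin n) k) ≠ 0 :=
    iota_ne_zero (mem_powers_ne_zero f hf q.property)
  have hspec : Localization.mk p q
      * algebraMap (MvPolynomial (Fin n) k) (Localization.Away f)
          (q : MvPolynomial (Fin n) k)
      = algebraMap (MvPolynomial (Fin n) k) (Localization.Away f) p := by
    rw [Localization.mk_eq_mk']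
    exact IsLocalization.mk'_spec _ _ _
  have := congrArg (phi f hf) hspec
  rw [map_mul, phi_alg, phi_alg] at this
  field_simp
  exact this

lemma phi_pdAway (hf : f ≠ 0) (i : Fin n) (x : Localization.Away f) :
    phi f hf (pdAway k n f i x) = pd k n i (phi f hf x) := by
  unfold pdAway
  set s := IsLocalization.sec (Submonoid.powers f) x with hs
  have hq : (s.2 : MvPolynomial (Fin n) k) ≠ 0 := mem_powers_ne_zero f hf s.2.property
  have hqK : ι k n (s.2 : MvPolynomial (Fin n) k) ≠ 0 := iota_ne_zero hq
  have hsec := IsLocalization.sec_spec (Submonoid.powers f) x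
  rw [← hs] at hsec
  have hx : phi f hf x = ι k n s.1 / ι k n (s.2 : MvPolynomial (Fin n) k) := by
    have := congrArg (phi f hf) hsec
    rw [map_mul, phi_alg, phi_alg] at this
    field_simp
    exact this
  rw [hx, pd_spec _ _ _ hq, phi_mk]
  push_cast [map_sub, map_mul]
  rw [sq]

/-- The unit `f` in the localization. -/
def U : (Localization.Away f)ˣ :=
  (IsLocalization.map_units (M := Submonoid.powers f) (Localization.Away f)
    ⟨f, Submonoid.mem_powers f⟩).unit

lemma U_val : (U f : Localization.Away f)
    = algebraMap (MvPolynomial (Fin n) k) (Localization.Away f) f :=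
  IsUnit.unit_spec _

lemma phi_U_zpow (hf : f ≠ 0) (t : ℤ) :
    phi f hf ((U f ^ t : (Localization.Away f)ˣ) : Localization.Away f)
      = (ι k n f) ^ t := by
  have h1 : phi f hf ((U f ^ t : (Localization.Away f)ˣ) : Localization.Away f)
      = ((Units.map (phi f hf).toMonoidHom (U f ^ t) : (K k n)ˣ) : K k n) := rfl
  rw [h1, map_zpow, Units.val_zpow_eq_zpow_val]
  congr 1
  show phi f hf (U f : Localization.Away f) = ι k n f
  rw [U_val, phi_alg]

lemma GenAway_trans {v w y : Localization.Away f}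
    (h1 : GenAway k n f v w) (h2 : GenAway k n f w y) : GenAway k n f v y := by
  induction h2 with
  | base => exact h1
  | add _ _ ih1 ih2 => exact GenAway.add ih1 ih2
  | smul c _ ih => exact GenAway.smul c ih
  | mulX i _ ih => exact GenAway.mulX i ih
  | diff i _ ih => exact GenAway.diff i ih

lemma GenAway_mulPoly {v : Localization.Away f} (g : MvPolynomial (Fin n) k) :
    ∀ {y : Localization.Away f}, GenAway k n f v y →
      GenAway k n f v
        (algebraMap (MvPolynomial (Fin n) k) (Localization.Away f) g * y) := by
  induction g using MvPolynomial.induction_on with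
  | C c => exact fun hy => GenAway.smul c hy
  | add p q ihp ihq =>
    intro y hy
    rw [map_add, add_mul]
    exact GenAway.add (ihp hy) (ihq hy)
  | mul_X p i ih =>
    intro y hy
    have : algebraMap (MvPolynomial (Fin n) k) (Localization.Away f)
          (p * MvPolynomial.X i) * y
        = algebraMap (MvPolynomial (Fin n) k) (Localization.Away f)
            (MvPolynomial.X i)
          * (algebraMap (MvPolynomial (Fin n) k) (Localization.Away f) p * y) := by
      rw [map_mul]; ring
    rw [this]
    exact GenAway.mulX i (ih hy)

lemma pd_zero (i : Fin n) : pd k n i (0 : K k n) = 0 := by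
  simpa using pd_iota (k := k) (n := n) i 0

lemma pd_sum {A : Type*} (i : Fin n) (s : Finset A) (g : A → K k n) :
    pd k n i (∑ a ∈ s, g a) = ∑ a ∈ s, pd k n i (g a) := by
  classical
  induction s using Finset.cons_induction with
  | empty => simpa using pd_zero (k := k) (n := n) i
  | cons a s ha ih =>
    rw [Finset.sum_cons, Finset.sum_cons, pd_add, ih]

lemma pd_tpow (i : Fin n) (t : ℤ) (j : ℕ) :
    pd k n i ((t : K k n) ^ j) = 0 := by
  rw [show ((t : K k n) ^ j) = ((t ^ j : ℤ) : K k n) by push_cast; ring, pd_intCast]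

lemma pd_eval (i : Fin n) (p : Polynomial (K k n)) (t : ℤ) :
    pd k n i (p.eval (t : K k n)) = (pdS k n i p).eval (t : K k n) := by
  unfold pdS
  rw [Polynomial.eval_eq_sum, Polynomial.sum, Polynomial.sum,
    Polynomial.eval_finset_sum, pd_sum]
  refine Finset.sum_congr rfl fun j _ => ?_
  rw [pd_mul, pd_tpow, Polynomial.eval_mul, Polynomial.eval_C, Polynomial.eval_pow,
    Polynomial.eval_X]
  ring

lemma key (hf : f ≠ 0) {p : Polynomial (K k n)} (hp : InSub k n f p) (t : ℤ) :
    ∃ y : Localization.Away f,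
      phi f hf y = p.eval (t : K k n) * (ι k n f) ^ t ∧
        GenAway k n f
          ((U f ^ (t + 1) : (Localization.Away f)ˣ) : Localization.Away f) y := by
  have hF : ι k n f ≠ 0 := iota_ne_zero hf
  induction hp with
  | base =>
    refine ⟨((U f ^ (t + 1) : (Localization.Away f)ˣ) : Localization.Away f),
      ?_, GenAway.base⟩
    rw [phi_U_zpow, Polynomial.eval_C, zpow_add_one₀ hF t]
    ring
  | add hp hq ihp ihq =>
    obtain ⟨y1, hy1, hg1⟩ := ihp
    obtain ⟨y2, hy2, hg2⟩ := ihq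
    refine ⟨y1 + y2, ?_, GenAway.add hg1 hg2⟩
    rw [map_add, hy1, hy2, Polynomial.eval_add]
    ring
  | smul c hp ih =>
    obtain ⟨y, hy, hg⟩ := ih
    refine ⟨algebraMap (MvPolynomial (Fin n) k) (Localization.Away f)
      (MvPolynomial.C c) * y, ?_, GenAway.smul c hg⟩
    rw [map_mul, phi_alg, hy, Polynomial.eval_mul, Polynomial.eval_C]
    ring
  | mulX i hp ih =>
    obtain ⟨y, hy, hg⟩ := ih
    refine ⟨algebraMap (MvPolynomial (Fin n) k) (Localization.Away f)
      (MvPolynomial.X i) * y, ?_, GenAway.mulX i hg⟩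
    rw [map_mul, phi_alg, hy, Polynomial.eval_mul, Polynomial.eval_C]
    ring
  | mulS hp ih =>
    obtain ⟨y, hy, hg⟩ := ih
    refine ⟨algebraMap (MvPolynomial (Fin n) k) (Localization.Away f)
      (MvPolynomial.C ((t : ℤ) : k)) * y, ?_, GenAway.smul ((t : ℤ) : k) hg⟩
    rw [map_mul, phi_alg, hy, Polynomial.eval_mul, Polynomial.eval_X]
    have h1 : (MvPolynomial.C ((t : ℤ) : k) : MvPolynomial (Fin n) k)
        = ((t : ℤ) : MvPolynomial (Fin n) k) := map_intCast _ t
    rw [h1, map_intCast]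
    ring
  | diff i hp ih =>
    obtain ⟨y, hy, hg⟩ := ih
    refine ⟨pdAway k n f i y, ?_, GenAway.diff i hg⟩
    rw [phi_pdAway, hy, pd_mul, pd_eval, pd_zpow i f hf t]
    unfold Dop
    rw [Polynomial.eval_add, Polynomial.eval_mul, Polynomial.eval_mul,
      Polynomial.eval_C, Polynomial.eval_X, zpow_sub_one₀ hF]
    field_simp

lemma step (hf : f ≠ 0) {b : Polynomial k} (hbmem : b ∈ bsSet k n f) (t : ℤ)
    (hev : Polynomial.eval ((t : ℤ) : k) b ≠ 0) :
    GenAway k n f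
      ((U f ^ (t + 1) : (Localization.Away f)ˣ) : Localization.Away f)
      ((U f ^ t : (Localization.Away f)ˣ) : Localization.Away f) := by
  obtain ⟨y, hy, hg⟩ := key f hf hbmem t
  set ψ : k →+* K k n := (ι k n).comp (MvPolynomial.C) with hψ
  set c₀ := Polynomial.eval ((t : ℤ) : k) b with hc₀
  have hev' : (b.map ψ).eval ((t : ℤ) : K k n) = ι k n (MvPolynomial.C c₀) := by
    rw [← map_intCast ψ t, Polynomial.eval_map, Polynomial.eval₂_hom, hψ]
    rfl
  have hg' := GenAway.smul (f := f) (c₀⁻¹) hg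
  have hphi : phi f hf
      (algebraMap (MvPolynomial (Fin n) k) (Localization.Away f)
        (MvPolynomial.C c₀⁻¹) * y) = (ι k n f) ^ t := by
    rw [map_mul, phi_alg, hy, hev', ← mul_assoc, ← map_mul,
      ← map_mul (MvPolynomial.C : k →+* MvPolynomial (Fin n) k),
      inv_mul_cancel₀ hev, map_one, map_one, one_mul]
  have := phi_inj f hf (by rw [hphi, phi_U_zpow] :
    phi f hf (algebraMap (MvPolynomial (Fin n) k) (Localization.Away f)
        (MvPolynomial.C c₀⁻¹) * y)
      = phi f hf ((U f ^ t : (Localization.Away f)ˣ) : Localization.Away f))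
  rw [this] at hg'
  exact hg'

lemma descent (hf : f ≠ 0) {b : Polynomial k} (hbmem : b ∈ bsSet k n f) (a : ℤ)
    (ha : ∀ j : ℕ, 1 ≤ j → Polynomial.eval ((a : k) - (j : k)) b ≠ 0) (j : ℕ) :
    GenAway k n f
      ((U f ^ a : (Localization.Away f)ˣ) : Localization.Away f)
      ((U f ^ (a - j) : (Localization.Away f)ˣ) : Localization.Away f) := by
  induction j with
  | zero => simpa using GenAway.base (f := f) (v := ((U f ^ a : (Localization.Away f)ˣ) : Localization.Away f))
  | succ j ih =>
    have hs : GenAway k n f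
        ((U f ^ (a - j) : (Localization.Away f)ˣ) : Localization.Away f)
        ((U f ^ (a - (j + 1 : ℕ)) : (Localization.Away f)ˣ) : Localization.Away f) := by
      have h1 : a - (j : ℤ) = (a - (j + 1 : ℕ)) + 1 := by push_cast; ring
      have h2 := step f hf hbmem (a - (j + 1 : ℕ)) (by
        have := ha (j + 1) (by omega)
        convert this using 2
        push_cast
        ring)
      rw [h1]
      exact h2
    exact GenAway_trans f ih hs

lemma U_pow_natCast (e : ℕ) :
    ((U f ^ ((e : ℤ)) : (Localization.Away f)ˣ) : Localization.Away f)
      = algebraMap (MvPolynomial (Fin n) k) (Localization.Away f) (f ^ e) := by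
  rw [zpow_natCast, Units.val_pow_eq_pow_val, U_val, map_pow]

end BSP
end Proof

theorem localization_generated_by_power
    (k : Type*) [Field k] [CharZero k] (n : ℕ)
    (f : MvPolynomial (Fin n) k) (hf : f ≠ 0)
    (b : Polynomial k) (hb : BS.IsBernsteinSato k n f b)
    (a : ℤ)
    (ha : ∀ j : ℕ, 1 ≤ j → Polynomial.eval ((a : k) - (j : k)) b ≠ 0) :
    ∀ y : Localization.Away f,
      BS.GenAway k n f
        (((IsLocalization.map_units (M := Submonoid.powers f)
              (Localization.Away f)
              ⟨f, Submonoid.mem_powers f⟩).unit ^ a :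
            (Localization.Away f)ˣ) : Localization.Away f) y := by
  intro y
  show BS.GenAway k n f
    ((BSP.U f ^ a : (Localization.Away f)ˣ) : Localization.Away f) y
  obtain ⟨⟨g, q⟩, hy⟩ := IsLocalization.surj (Submonoid.powers f) y
  obtain ⟨e, he⟩ := q.property
  have he' : f ^ e = (q : MvPolynomial (Fin n) k) := he
  have hy2 : y = algebraMap (MvPolynomial (Fin n) k) (Localization.Away f) g
      * ((BSP.U f ^ (-(e : ℤ)) : (Localization.Away f)ˣ) : Localization.Away f) := by
    have h1 : algebraMap (MvPolynomial (Fin n) k) (Localization.Away f) g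
        = y * ((BSP.U f ^ ((e : ℤ)) : (Localization.Away f)ˣ) :
            Localization.Away f) := by
      rw [BSP.U_pow_natCast, he']
      exact hy.symm
    rw [h1, mul_assoc, ← Units.val_mul, ← zpow_add, add_neg_cancel, zpow_zero,
      Units.val_one, mul_one]
  set j : ℕ := (a + e).toNat with hj
  have hjge : (j : ℤ) ≥ a + e := Int.self_le_toNat _
  set d : ℕ := (-(e : ℤ) - (a - j)).toNat with hdd
  have hd : (d : ℤ) = -(e : ℤ) - (a - j) := Int.toNat_of_nonneg (by omega)
  have hsplit : ((BSP.U f ^ (-(e : ℤ)) : (Localization.Away f)ˣ) :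
        Localization.Away f)
      = algebraMap (MvPolynomial (Fin n) k) (Localization.Away f) (f ^ d)
        * ((BSP.U f ^ (a - j) : (Localization.Away f)ˣ) : Localization.Away f) := by
    have hexp : -(e : ℤ) = (d : ℤ) + (a - j) := by omega
    rw [hexp, zpow_add, Units.val_mul, BSP.U_pow_natCast]
  rw [hy2, hsplit, ← mul_assoc, ← map_mul]
  exact BSP.GenAway_mulPoly f (g * f ^ d)
    (BSP.descent f hf hb.2.1 a ha j)
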